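/- arXiv:2603.12602 — 3 statements merged into one kernel-verified Lean document; each statement's English description precedes it below -/
import Mathlib

section
/- Let A be an n×n real matrix that is strictly diagonally dominant by rows, with row dominance margin m_i := |A_{i,i}| − Σ_{j≠i} |A_{i,j}| > 0 for each i. Then A is invertible and ‖A^{-1}‖_∞ ≤ 1 / min_i m_i, where ‖·‖_∞ is the matrix norm induced by the sup-norm on vectors (maximum absolute row sum norm of the inverse). -/
open BigOperators Matrix

lemma varah_key {n : Type*} [Fintype n] [DecidableEq n]
    (A : Matrix n n ℝ) (m : n → ℝ)
    (hm : ∀ i, m i = |A i i| - ∑ j ∈ Finset.univ.erase i, |A i j|)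
    (x : n → ℝ) (k : n) (hk : ∀ j, |x j| ≤ |x k|) :
    m k * |x k| ≤ |(A *ᵥ x) k| := by
  have h1 : (A *ᵥ x) k = A k k * x k + ∑ j ∈ Finset.univ.erase k, A k j * x j := by
    rw [Matrix.mulVec, dotProduct,
      ← Finset.add_sum_erase _ _ (Finset.mem_univ k)]
  set s := ∑ j ∈ Finset.univ.erase k, A k j * x j with hs
  have hxk : 0 ≤ |x k| := abs_nonneg _
  have h2 : |s| ≤ (∑ j ∈ Finset.univ.erase k, |A k j|) * |x k| := by
    calc |s| ≤ ∑ j ∈ Finset.univ.erase k, |A k j * x j| :=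
          Finset.abs_sum_le_sum_abs _ _
      _ ≤ ∑ j ∈ Finset.univ.erase k, |A k j| * |x k| := by
          apply Finset.sum_le_sum
          intro j _
          rw [abs_mul]
          exact mul_le_mul_of_nonneg_left (hk j) (abs_nonneg _)
      _ = (∑ j ∈ Finset.univ.erase k, |A k j|) * |x k| := by
          rw [Finset.sum_mul]
  have h3 : |A k k * x k| - |s| ≤ |(A *ᵥ x) k| := by
    have : |A k k * x k| ≤ |(A *ᵥ x) k| + |s| := by
      calc |A k k * x k| = |(A k k * x k + s) - s| := by ring_nf
        _ ≤ |A k k * x k + s| + |s| := abs_sub _ _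
        _ = |(A *ᵥ x) k| + |s| := by rw [h1]
    linarith
  calc m k * |x k| = |A k k| * |x k| - (∑ j ∈ Finset.univ.erase k, |A k j|) * |x k| := by
        rw [hm k]; ring
    _ ≤ |A k k * x k| - |s| := by rw [abs_mul]; linarith
    _ ≤ |(A *ᵥ x) k| := h3

/-- Varah's bound: a row-strictly-diagonally-dominant real matrix `A` with row
dominance margins `m_i = |A_{ii}| − Σ_{j≠i} |A_{ij}| > 0` is invertible, and the
maximum absolute row sum norm of its inverse is at most `1 / min_i m_i`. -/
theorem varah_bound {n : Type*} [Fintype n] [DecidableEq n] [Nonempty n]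
    (A : Matrix n n ℝ) (m : n → ℝ)
    (hm : ∀ i, m i = |A i i| - ∑ j ∈ Finset.univ.erase i, |A i j|)
    (hpos : ∀ i, 0 < m i) :
    IsUnit A ∧
    ∀ i, (∑ j, |A⁻¹ i j|) ≤ 1 / Finset.univ.inf' Finset.univ_nonempty m := by
  have hdet : A.det ≠ 0 := by
    intro h
    obtain ⟨v, hv, hAv⟩ := (Matrix.exists_mulVec_eq_zero_iff).2 h
    obtain ⟨k, -, hk⟩ := Finset.exists_max_image Finset.univ (fun j => |v j|)
      Finset.univ_nonempty
    have := varah_key A m hm v k (fun j => hk j (Finset.mem_univ j))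
    rw [hAv] at this
    simp only [Pi.zero_apply, abs_zero] at this
    have hvk : |v k| ≤ 0 := by nlinarith [hpos k, abs_nonneg (v k)]
    apply hv
    funext j
    have := hk j (Finset.mem_univ j)
    have : |v j| ≤ 0 := le_trans this hvk
    simpa using le_antisymm this (abs_nonneg _) ▸ abs_eq_zero.1 (le_antisymm this (abs_nonneg _))
  constructor
  · exact (Matrix.isUnit_iff_isUnit_det A).2 (isUnit_iff_ne_zero.2 hdet)
  · intro i
    set μ := Finset.univ.inf' Finset.univ_nonempty m with hμ
    have hμpos : 0 < μ := by
      obtain ⟨j, -, hj⟩ := Finset.exists_mem_eq_inf' Finset.univ_nonempty m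
      rw [hμ, hj]; exact hpos j
    set y : n → ℝ := fun j => if 0 ≤ A⁻¹ i j then 1 else -1 with hy
    have hy1 : ∀ j, |y j| ≤ 1 := by
      intro j; rw [hy]; dsimp only; split <;> simp
    set x := A⁻¹ *ᵥ y with hx
    have hxi : x i = ∑ j, |A⁻¹ i j| := by
      rw [hx, Matrix.mulVec, dotProduct]
      apply Finset.sum_congr rfl
      intro j _
      rw [hy]; dsimp only
      split_ifs with h
      · rw [mul_one, abs_of_nonneg h]
      · rw [mul_neg_one, abs_of_neg (lt_of_not_ge h)]
    have hAx : A *ᵥ x = y := by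
      rw [hx, Matrix.mulVec_mulVec, Matrix.mul_nonsing_inv A (isUnit_iff_ne_zero.2 hdet),
        Matrix.one_mulVec]
    obtain ⟨k, -, hk⟩ := Finset.exists_max_image Finset.univ (fun j => |x j|)
      Finset.univ_nonempty
    have key := varah_key A m hm x k (fun j => hk j (Finset.mem_univ j))
    rw [hAx] at key
    have hμk : μ ≤ m k := Finset.inf'_le m (Finset.mem_univ k)
    have hxik : |x i| ≤ |x k| := hk i (Finset.mem_univ i)
    have hsum : μ * (∑ j, |A⁻¹ i j|) ≤ 1 := by
      calc μ * (∑ j, |A⁻¹ i j|) = μ * x i := by rw [hxi]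
        _ ≤ μ * |x i| := mul_le_mul_of_nonneg_left (le_abs_self _) hμpos.le
        _ ≤ m k * |x k| := mul_le_mul hμk hxik (abs_nonneg _)
            (le_trans hμpos.le hμk)
        _ ≤ |y k| := key
        _ ≤ 1 := hy1 k
    rw [le_div_iff₀ hμpos, mul_comm]
    exact hsum
end

section
/- Let k, b > 0 and 0 < δ < b, and let f_{k,b}(x) = b^k x^{k-1} e^{-bx}/Γ(k) be the Gamma density. Then for all x > 0, e^{δx} f_{k,b}(x) = (b/(b-δ))^k · f_{k, b-δ}(x). Consequently ∫₀^∞ e^{δx} |∂_b f_{k,b}(x)| dx ≤ (b/(b-δ))^k · (kδ/(b(b-δ)) + √k/(b-δ)). -/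
set_option maxHeartbeats 1000000

open MeasureTheory ProbabilityTheory Set Real

private lemma gint_integrable {s c : ℝ} (hs : 0 < s) (hc : 0 < c) :
    IntegrableOn (gammaPDFReal s c) (Set.Ioi 0) volume := by
  refine ⟨(measurable_gammaPDFReal s c).aestronglyMeasurable.restrict, ?_⟩
  rw [hasFiniteIntegral_iff_ofReal (ae_of_all _ (gammaPDFReal_nonneg hs hc))]
  calc ∫⁻ x in Ioi 0, ENNReal.ofReal (gammaPDFReal s c x)
      ≤ ∫⁻ x, ENNReal.ofReal (gammaPDFReal s c x) := setLIntegral_le_lintegral _ _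
    _ = ∫⁻ x, gammaPDF s c x := rfl
    _ = 1 := lintegral_gammaPDF_eq_one hs hc
    _ < ⊤ := by norm_num

private lemma gint_one {s c : ℝ} (hs : 0 < s) (hc : 0 < c) :
    ∫ x in Ioi 0, gammaPDFReal s c x = 1 := by
  rw [setIntegral_congr_fun (g := fun x => c ^ s / Real.Gamma s * (x ^ (s - 1) * Real.exp (-(c * x))))
    measurableSet_Ioi (fun x hx => by
      simp [gammaPDFReal, if_pos (le_of_lt (mem_Ioi.mp hx)), mul_assoc])]
  rw [integral_const_mul, integral_rpow_mul_exp_neg_mul_Ioi hs hc,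
    Real.div_rpow zero_le_one hc.le, Real.one_rpow]
  have h1 : Real.Gamma s ≠ 0 := (Real.Gamma_pos_of_pos hs).ne'
  have h2 : c ^ s ≠ 0 := (Real.rpow_pos_of_pos hc s).ne'
  field_simp

private lemma gmul {s c : ℝ} (hs : 0 < s) (hc : 0 < c) {x : ℝ} (hx : 0 < x) :
    x * gammaPDFReal s c x = s / c * gammaPDFReal (s + 1) c x := by
  simp only [gammaPDFReal, if_pos hx.le]
  rw [Real.Gamma_add_one hs.ne', Real.rpow_add hc, Real.rpow_one,
    show s + 1 - 1 = s - 1 + 1 by ring, Real.rpow_add hx, Real.rpow_one]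
  have h1 : Real.Gamma s ≠ 0 := (Real.Gamma_pos_of_pos hs).ne'
  field_simp

private lemma gderiv {k b x : ℝ} (hb : 0 < b) (hx : 0 < x) :
    deriv (fun b' => gammaPDFReal k b' x) b = (k / b - x) * gammaPDFReal k b x := by
  have hfun : (fun b' => gammaPDFReal k b' x)
      = fun b' => b' ^ k / Real.Gamma k * x ^ (k - 1) * Real.exp (-(b' * x)) :=
    funext fun b' => by simp [gammaPDFReal, if_pos hx.le]
  rw [hfun]
  have h1 : HasDerivAt (fun b' : ℝ => b' ^ k) (k * b ^ (k - 1)) b :=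
    Real.hasDerivAt_rpow_const (Or.inl hb.ne')
  have h2 : HasDerivAt (fun b' : ℝ => Real.exp (-(b' * x)))
      (Real.exp (-(b * x)) * -(1 * x)) b := (((hasDerivAt_id b).mul_const x).neg).exp
  have h3 := ((h1.div_const (Real.Gamma k)).mul_const (x ^ (k - 1))).mul h2
  rw [(show HasDerivAt (fun b' : ℝ => b' ^ k / Real.Gamma k * x ^ (k - 1) * Real.exp (-(b' * x))) _ b from h3).deriv]
  simp only [gammaPDFReal, if_pos hx.le]
  have hbk : b ^ (k - 1) = b ^ k / b := by
    rw [Real.rpow_sub hb, Real.rpow_one]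
  rw [hbk]
  ring

/-- Esscher tilt identity for the Gamma density,
`e^{δx} f_{k,b}(x) = (b/(b−δ))^k f_{k,b−δ}(x)`, and the resulting weighted `L¹`
bound on the `b`-derivative of the density:
`∫ e^{δx} |∂_b f_{k,b}(x)| dx ≤ (b/(b−δ))^k (kδ/(b(b−δ)) + √k/(b−δ))`. -/
theorem gamma_tilt_and_b_derivative_bound (k b δ : ℝ)
    (hk : 0 < k) (hδ : 0 < δ) (hδb : δ < b) :
    (∀ x : ℝ, 0 < x →
      Real.exp (δ * x) * gammaPDFReal k b x
        = (b / (b - δ)) ^ k * gammaPDFReal k (b - δ) x) ∧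
    (∫ x in Set.Ioi (0 : ℝ),
        Real.exp (δ * x) * |deriv (fun b' => gammaPDFReal k b' x) b|)
      ≤ (b / (b - δ)) ^ k * (k * δ / (b * (b - δ)) + Real.sqrt k / (b - δ)) := by
  have hb : 0 < b := hδ.trans hδb
  have hc : 0 < b - δ := by linarith
  have hck : (0:ℝ) < (b - δ) ^ k := Real.rpow_pos_of_pos hc k
  have part1 : ∀ x : ℝ, 0 < x →
      Real.exp (δ * x) * gammaPDFReal k b x
        = (b / (b - δ)) ^ k * gammaPDFReal k (b - δ) x := by
    intro x hx
    simp only [gammaPDFReal, if_pos hx.le]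
    rw [Real.div_rpow hb.le hc.le]
    have hexp : Real.exp (-((b - δ) * x)) = Real.exp (δ * x) * Real.exp (-(b * x)) := by
      rw [← Real.exp_add]; ring_nf
    rw [hexp]
    field_simp
  refine ⟨part1, ?_⟩
  set c := b - δ with hcdef
  set a := Real.sqrt k / c with hadef
  set m := k / c with hmdef
  clear_value a m
  clear_value c
  have hsk : Real.sqrt k * Real.sqrt k = k := Real.mul_self_sqrt hk.le
  have hs : 0 < Real.sqrt k := Real.sqrt_pos.mpr hk
  have ha : 0 < a := hadef ▸ div_pos hs hc
  have hI : (∫ x in Set.Ioi (0:ℝ),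
        Real.exp (δ * x) * |deriv (fun b' => gammaPDFReal k b' x) b|)
      = (b / c) ^ k * ∫ x in Set.Ioi (0:ℝ), |k / b - x| * gammaPDFReal k c x := by
    rw [← integral_const_mul]
    refine setIntegral_congr_fun measurableSet_Ioi fun x hx => ?_
    have hx : (0:ℝ) < x := hx
    rw [gderiv hb hx, abs_mul, abs_of_nonneg (gammaPDFReal_nonneg hk hb x),
      show Real.exp (δ * x) * (|k / b - x| * gammaPDFReal k b x)
        = |k / b - x| * (Real.exp (δ * x) * gammaPDFReal k b x) by ring,
      part1 x hx]
    ring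
  have key : (∫ x in Set.Ioi (0:ℝ), |k / b - x| * gammaPDFReal k c x)
      ≤ k * δ / (b * c) + a := by
    set P := 1 / (2 * a) * (k / c * ((k + 1) / c)) with hP
    set Q := -(m / a * (k / c)) with hQ
    set R := m ^ 2 / (2 * a) + a / 2 + k * δ / (b * c) with hR
    have hi2 : IntegrableOn (gammaPDFReal (k + 1 + 1) c) (Set.Ioi 0) volume :=
      gint_integrable (by linarith) hc
    have hi1 : IntegrableOn (gammaPDFReal (k + 1) c) (Set.Ioi 0) volume :=
      gint_integrable (by linarith) hc
    have hi0 : IntegrableOn (gammaPDFReal k c) (Set.Ioi 0) volume := gint_integrable hk hc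
    have hGint : Integrable (fun x => P * gammaPDFReal (k + 1 + 1) c x
        + Q * gammaPDFReal (k + 1) c x + R * gammaPDFReal k c x)
        (volume.restrict (Set.Ioi 0)) :=
      ((hi2.const_mul P).add (hi1.const_mul Q)).add (hi0.const_mul R)
    have hpt : ∀ x ∈ Set.Ioi (0:ℝ), |k / b - x| * gammaPDFReal k c x
        ≤ P * gammaPDFReal (k + 1 + 1) c x + Q * gammaPDFReal (k + 1) c x
          + R * gammaPDFReal k c x := by
      intro x hx
      have hx : (0:ℝ) < x := hx
      have hf0 : 0 ≤ gammaPDFReal k c x := gammaPDFReal_nonneg hk hc x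
      have e1 : x * gammaPDFReal k c x = k / c * gammaPDFReal (k + 1) c x := gmul hk hc hx
      have e2 : x * gammaPDFReal (k + 1) c x = (k + 1) / c * gammaPDFReal (k + 1 + 1) c x :=
        gmul (by linarith) hc hx
      have hx2 : x * (x * gammaPDFReal k c x)
          = k / c * ((k + 1) / c) * gammaPDFReal (k + 1 + 1) c x := by
        rw [e1, show x * (k / c * gammaPDFReal (k + 1) c x)
          = k / c * (x * gammaPDFReal (k + 1) c x) by ring, e2]
        ring
      have habs : |k / b - x| ≤ (x - m) ^ 2 / (2 * a) + a / 2 + k * δ / (b * c) := by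
        have h1 : |k / b - x| ≤ |x - m| + k * δ / (b * c) := by
          have hdiff : m - k / b = k * δ / (b * c) := by
            have hb0 : b ≠ 0 := hb.ne'
            have hc0 : b - δ ≠ 0 := sub_ne_zero.mpr hδb.ne'
            rw [hmdef, hcdef]
            field_simp
            ring
          calc |k / b - x| = |(x - m) + (m - k / b)| := by
                rw [abs_sub_comm]; congr 1; ring
            _ ≤ |x - m| + |m - k / b| := abs_add_le _ _
            _ = |x - m| + k * δ / (b * c) := by
                have hpos : 0 ≤ k * δ / (b * c) :=
                  le_of_lt (div_pos (mul_pos hk hδ) (mul_pos hb hc))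
                rw [hdiff, abs_of_nonneg hpos]
        have h2 : |x - m| ≤ (x - m) ^ 2 / (2 * a) + a / 2 := by
          have h2' : 2 * a * |x - m| ≤ (x - m) ^ 2 + a ^ 2 := by
            nlinarith [sq_nonneg (|x - m| - a), sq_abs (x - m)]
          have heq : (x - m) ^ 2 / (2 * a) + a / 2 = ((x - m) ^ 2 + a ^ 2) / (2 * a) := by
            field_simp
          rw [heq, le_div_iff₀ (by positivity)]
          nlinarith [h2']
        linarith
      calc |k / b - x| * gammaPDFReal k c x
          ≤ ((x - m) ^ 2 / (2 * a) + a / 2 + k * δ / (b * c)) * gammaPDFReal k c x :=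
            mul_le_mul_of_nonneg_right habs hf0
        _ = P * gammaPDFReal (k + 1 + 1) c x + Q * gammaPDFReal (k + 1) c x
            + R * gammaPDFReal k c x := by
            rw [hP, hQ, hR]
            linear_combination (1 / (2 * a)) * hx2 - (m / a) * e1
    have hmono := integral_mono_of_nonneg
      (ae_of_all _ fun x => mul_nonneg (abs_nonneg _) (gammaPDFReal_nonneg hk hc x))
      hGint ((ae_restrict_iff' measurableSet_Ioi).mpr (ae_of_all _ hpt))
    have hval : (∫ x in Set.Ioi (0:ℝ), (P * gammaPDFReal (k + 1 + 1) c x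
        + Q * gammaPDFReal (k + 1) c x + R * gammaPDFReal k c x)) = P + Q + R := by
      have hiPQ : Integrable (fun x => P * gammaPDFReal (k + 1 + 1) c x
          + Q * gammaPDFReal (k + 1) c x) (volume.restrict (Set.Ioi 0)) :=
        (hi2.const_mul P).add (hi1.const_mul Q)
      rw [integral_add hiPQ (hi0.const_mul R),
        integral_add (hi2.const_mul P) (hi1.const_mul Q),
        integral_const_mul, integral_const_mul, integral_const_mul,
        gint_one (by linarith) hc, gint_one (by linarith) hc, gint_one hk hc]
      ring
    have harith : P + Q + R = k * δ / (b * c) + a := by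
      have ha' : a ≠ 0 := ha.ne'
      have hc' : c ≠ 0 := hc.ne'
      have hb' : b ≠ 0 := hb.ne'
      have h1 : P + Q + R = k / c ^ 2 / (2 * a) + a / 2 + k * δ / (b * c) := by
        rw [hP, hQ, hR, hmdef]
        ring
      have h2 : k / c ^ 2 / (2 * a) = Real.sqrt k / (2 * c) := by
        rw [hadef, div_div,
          show c ^ 2 * (2 * (Real.sqrt k / c)) = 2 * c * Real.sqrt k by field_simp,
          div_eq_div_iff (mul_pos (mul_pos two_pos hc) hs).ne'
            (mul_pos two_pos hc).ne']
        linear_combination (-(2 * c)) * hsk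
      rw [h1, h2, hadef]
      ring
    calc (∫ x in Set.Ioi (0:ℝ), |k / b - x| * gammaPDFReal k c x)
        ≤ P + Q + R := hval ▸ hmono
      _ = k * δ / (b * c) + a := harith
  rw [hI]
  exact mul_le_mul_of_nonneg_left key (Real.rpow_nonneg (div_nonneg hb.le hc.le) k)
end

section
/- Let F ∈ C²([λ_{j-1}, λ_{j+1}]) and let d_{j-1} = (F(λ_j)−F(λ_{j-1}))/h_{j-1}, d_j = (F(λ_{j+1})−F(λ_j))/h_j be the secant slopes, with h = max(h_{j-1}, h_j). If d_{j-1}·d_j ≤ 0, then |F'(λ_j)| ≤ 2h·sup|F''|. Consequently, the PCHIP rule setting the nodal slope m_j = 0 in this non-monotone case satisfies |m_j − F'(λ_j)| ≤ 2h·sup|F''|. -/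
open Set

/-- PCHIP non-monotone case: if the secant slopes `d_{j-1}, d_j` around `λ_j` have
product `≤ 0` and `F ∈ C²`, then `|F'(λ_j)| ≤ 2h·sup|F''|`; consequently the PCHIP
choice `m_j = 0` satisfies `|m_j − F'(λ_j)| ≤ 2h·sup|F''|`. -/
theorem pchip_nonmonotone_slope (x0 x1 x2 : ℝ) (h01 : x0 < x1) (h12 : x1 < x2)
    (F F' F'' : ℝ → ℝ) (M : ℝ)
    (hd1 : ∀ x ∈ Icc x0 x2, HasDerivAt F (F' x) x)
    (hd2 : ∀ x ∈ Icc x0 x2, HasDerivAt F' (F'' x) x)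
    (hM : ∀ x ∈ Icc x0 x2, |F'' x| ≤ M)
    (hsign : ((F x1 - F x0) / (x1 - x0)) * ((F x2 - F x1) / (x2 - x1)) ≤ 0) :
    |F' x1| ≤ 2 * max (x1 - x0) (x2 - x1) * M ∧
    |(0 : ℝ) - F' x1| ≤ 2 * max (x1 - x0) (x2 - x1) * M := by
  have h02 : x0 < x2 := h01.trans h12
  -- F is continuous on Icc x0 x2
  have hFcont : ContinuousOn F (Icc x0 x2) := fun x hx =>
    (hd1 x hx).continuousAt.continuousWithinAt
  have hF'cont : ContinuousOn F' (Icc x0 x2) := fun x hx =>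
    (hd2 x hx).continuousAt.continuousWithinAt
  -- MVT on [x0, x1]
  obtain ⟨e0, he0, hFe0⟩ := exists_hasDerivAt_eq_slope F F' h01
    (hFcont.mono (Icc_subset_Icc le_rfl h12.le))
    (fun x hx => hd1 x ⟨hx.1.le, hx.2.le.trans h12.le⟩)
  obtain ⟨e1, he1, hFe1⟩ := exists_hasDerivAt_eq_slope F F' h12
    (hFcont.mono (Icc_subset_Icc h01.le le_rfl))
    (fun x hx => hd1 x ⟨h01.le.trans hx.1.le, hx.2.le⟩)
  have he0m : e0 ∈ Icc x0 x2 := ⟨he0.1.le, he0.2.le.trans h12.le⟩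
  have he1m : e1 ∈ Icc x0 x2 := ⟨h01.le.trans he1.1.le, he1.2.le⟩
  -- 0 is between F' e0 and F' e1
  have h0mem : (0 : ℝ) ∈ uIcc (F' e0) (F' e1) := by
    rw [hFe0, hFe1]
    rcases mul_nonpos_iff.mp hsign with ⟨h1, h2⟩ | ⟨h1, h2⟩
    · exact mem_uIcc.mpr (Or.inr ⟨h2, h1⟩)
    · exact mem_uIcc.mpr (Or.inl ⟨h1, h2⟩)
  have huIcc : uIcc e0 e1 ⊆ Icc x0 x2 := by
    exact uIcc_subset_Icc he0m he1m
  obtain ⟨γ, hγmem, hγ⟩ := intermediate_value_uIcc (hF'cont.mono huIcc) h0mem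
  have hγ02 : γ ∈ Icc x0 x2 := huIcc hγmem
  -- Bound |F' x1 - F' γ| ≤ M * |x1 - γ|
  have hconv : Convex ℝ (Icc x0 x2) := convex_Icc _ _
  have hx1mem : x1 ∈ Icc x0 x2 := ⟨h01.le, h12.le⟩
  have hbound : ‖F' x1 - F' γ‖ ≤ M * ‖x1 - γ‖ :=
    hconv.norm_image_sub_le_of_norm_hasDerivWithin_le
      (fun x hx => (hd2 x hx).hasDerivWithinAt)
      (fun x hx => by simpa [Real.norm_eq_abs] using hM x hx) hγ02 hx1mem
  have hdist : |x1 - γ| ≤ 2 * max (x1 - x0) (x2 - x1) := by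
    have h1 : x1 - x0 ≤ max (x1 - x0) (x2 - x1) := le_max_left _ _
    have h2 : x2 - x1 ≤ max (x1 - x0) (x2 - x1) := le_max_right _ _
    rw [abs_sub_le_iff]
    constructor <;> nlinarith [hγ02.1, hγ02.2]
  have hM0 : 0 ≤ M := le_trans (abs_nonneg _) (hM x1 hx1mem)
  have key : |F' x1| ≤ 2 * max (x1 - x0) (x2 - x1) * M := by
    have : |F' x1| = |F' x1 - F' γ| := by rw [hγ]; ring_nf
    rw [this]
    calc |F' x1 - F' γ| ≤ M * |x1 - γ| := by
          simpa [Real.norm_eq_abs] using hbound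
      _ ≤ M * (2 * max (x1 - x0) (x2 - x1)) := by
          exact mul_le_mul_of_nonneg_left hdist hM0
      _ = 2 * max (x1 - x0) (x2 - x1) * M := by ring
  exact ⟨key, by simpa using key⟩
end
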